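/- There exists a proper 4-colouring χ of Q_3 that is frozen: for every vertex v and every colour j ≠ χ(v), changing χ at v to j produces an improper colouring (equivalently, every colour in {0,1,2,3} appears in the closed neighbourhood of every vertex). -/

import Mathlib

/-- The `d`-dimensional hypercube graph. -/
def hypercube (d : ℕ) : SimpleGraph (Fin d → Bool) where
  Adj x y := ∃! i, x i ≠ y i
  symm := by
    constructor
    rintro x y ⟨i, hi, hu⟩
    exact ⟨i, Ne.symm hi, fun j hj => hu j (Ne.symm hj)⟩
  loopless := by
    constructor
    rintro x ⟨i, hi, -⟩
    exact hi rfl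

instance (d : ℕ) : DecidableRel (hypercube d).Adj :=
  fun x y => inferInstanceAs (Decidable (∃ i, (x i ≠ y i) ∧ ∀ j, x j ≠ y j → j = i))

/-- There is a frozen proper 4-colouring of `Q_3`: changing the colour of any
single vertex always yields an improper colouring. -/
theorem exists_frozen_four_colouring_Q3 :
    ∃ χ : (Fin 3 → Bool) → Fin 4,
      (∀ x y, (hypercube 3).Adj x y → χ x ≠ χ y) ∧
      ∀ (v : Fin 3 → Bool) (j : Fin 4), j ≠ χ v →
        ¬ (∀ x y, (hypercube 3).Adj x y →
            Function.update χ v j x ≠ Function.update χ v j y) := by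
  use fun x => (if x 0 ≠ x 2 then 2 else 0) + (if x 1 ≠ x 2 then 1 else 0)
  constructor <;> decide
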